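/- Let E be a directed graph and K a field. The Jacobson radical of the path algebra KE equals the K-vector space spanned by the paths without return, i.e., the paths λ of length ≥ 1 for which there is no path μ with s(μ) = r(λ) and r(μ) = s(λ). Moreover, this equals the two-sided ideal generated by the edges without return. -/

import Mathlib

/-- A directed graph: vertices, edges, source and range maps. -/
structure DGraph : Type 1 where
  V : Type
  Edge : Type
  s : Edge → V
  r : Edge → V

namespace DGraph

/-- A list of edges is composable if consecutive edges match up. -/
def IsComposable (G : DGraph) (l : List G.Edge) : Prop :=
  l.Chain' (fun e f => G.r e = G.s f)

/-- A path in `G`: either a trivial path at a vertex, or a nonempty composable list of edges. -/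
def GPath (G : DGraph) : Type :=
  G.V ⊕ {l : List G.Edge // l ≠ [] ∧ G.IsComposable l}

namespace GPath

variable {G : DGraph}

/-- The source of a path. -/
def src : GPath G → G.V
  | Sum.inl v => v
  | Sum.inr l => G.s (l.1.head l.2.1)

/-- The range of a path. -/
def rng : GPath G → G.V
  | Sum.inl v => v
  | Sum.inr l => G.r (l.1.getLast l.2.1)

/-- The length of a path. -/
def length : GPath G → ℕ
  | Sum.inl _ => 0
  | Sum.inr l => l.1.length

/-- The trivial path at a vertex. -/
def ofVertex (v : G.V) : GPath G := Sum.inl v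

/-- The length-one path given by an edge. -/
def ofEdge (e : G.Edge) : GPath G :=
  Sum.inr ⟨[e], by simp, List.isChain_singleton e⟩

/-- Concatenation of composable paths. -/
def comp : (p q : GPath G) → p.rng = q.src → GPath G
  | Sum.inl _, q, _ => q
  | Sum.inr l, Sum.inl _, _ => Sum.inr l
  | Sum.inr l, Sum.inr m, h => Sum.inr ⟨l.1 ++ m.1, by
      refine ⟨by simp [l.2.1], l.2.2.append m.2.2 ?_⟩
      intro x hx y hy
      rw [List.getLast?_eq_some_getLast l.2.1] at hx
      rw [List.head?_eq_head m.2.1] at hy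
      cases hx
      cases hy
      exact h⟩

end GPath

end DGraph

open DGraph

/-- A realization of the path algebra of the graph `G` over the field `K`:
a `K`-algebra with a basis indexed by the paths of `G`, multiplying by concatenation. -/
structure PathAlgebraOn (K : Type) [Field K] (G : DGraph) (A : Type)
    [NonUnitalRing A] [Module K A] where
  basis : Module.Basis (GPath G) K A
  mul_comp : ∀ (p q : GPath G) (h : p.rng = q.src),
      basis p * basis q = basis (p.comp q h)
  mul_ncomp : ∀ p q : GPath G, p.rng ≠ q.src → basis p * basis q = 0

/-- `z` is quasi-regular. -/
def QuasiReg (A : Type) [NonUnitalRing A] (z : A) : Prop :=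
  ∃ z' : A, z + z' - z * z' = 0 ∧ z' + z - z' * z = 0

/-- The Jacobson radical of a (possibly nonunital) ring: all `z` such that `a * z * b`
is quasi-regular for all `a, b`. -/
def jacRad (A : Type) [NonUnitalRing A] : Set A :=
  {z : A | ∀ a b : A, QuasiReg A (a * z * b)}

/-- A path without return: a nontrivial path `λ` such that no path goes from `r(λ)`
back to `s(λ)`. -/
def DGraph.NoReturnPath (G : DGraph) (p : DGraph.GPath G) : Prop :=
  0 < p.length ∧ ¬ ∃ q : DGraph.GPath G, q.src = p.rng ∧ q.rng = p.src

/-- An edge without return. -/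
def DGraph.NoReturnEdge (G : DGraph) (e : G.Edge) : Prop :=
  ¬ ∃ q : DGraph.GPath G, q.src = G.r e ∧ q.rng = G.s e


namespace DGraph
namespace GPath
variable {G : DGraph}

-- ## auxiliary lemmas

@[simp] lemma src_inl (v : G.V) : src (Sum.inl v : GPath G) = v := rfl
@[simp] lemma rng_inl (v : G.V) : rng (Sum.inl v : GPath G) = v := rfl
@[simp] lemma length_inl (v : G.V) : length (Sum.inl v : GPath G) = 0 := rfl

lemma eq_inl_of_length_eq_zero {p : GPath G} (h : p.length = 0) : p = Sum.inl p.src := by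
  cases p with
  | inl v => rfl
  | inr l => exact absurd (List.length_eq_zero_iff.mp h) l.2.1

lemma src_comp (p q : GPath G) (h : p.rng = q.src) : (p.comp q h).src = p.src := by
  cases p with
  | inl v => exact h.symm
  | inr l =>
    cases q with
    | inl w => rfl
    | inr m =>
      show G.s ((l.1 ++ m.1).head _) = G.s (l.1.head _)
      rw [List.head_append_left l.2.1]

lemma rng_comp (p q : GPath G) (h : p.rng = q.src) : (p.comp q h).rng = q.rng := by
  cases p with
  | inl v => rfl
  | inr l =>
    cases q with
    | inl w => exact h
    | inr m =>
      show G.r ((l.1 ++ m.1).getLast _) = G.r (m.1.getLast _)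
      rw [List.getLast_append_of_ne_nil _ m.2.1]

lemma length_comp (p q : GPath G) (h : p.rng = q.src) :
    (p.comp q h).length = p.length + q.length := by
  cases p with
  | inl v => simp [comp, length]
  | inr l =>
    cases q with
    | inl w => simp [comp, length]
    | inr m => simpa [comp, length] using (List.length_append l.1 m.1)

lemma comp_inj {p q p' q' : GPath G} (h : p.rng = q.src) (h' : p'.rng = q'.src)
    (hlen : p.length = p'.length) (heq : p.comp q h = p'.comp q' h') :
    p = p' ∧ q = q' := by
  have hlen2 : q.length = q'.length := by
    have := congrArg length heq
    rw [length_comp, length_comp] at this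
    omega
  cases p with
  | inl v =>
    cases p' with
    | inl v' =>
      refine ⟨?_, heq⟩
      have h1 : v = src q := h
      have h2 : v' = src q' := h'
      rw [show (q : GPath G) = q' from heq] at h1
      rw [h1, h2]
    | inr l' => exact absurd hlen.symm (by simp [length, l'.2.1])
  | inr l =>
    cases p' with
    | inl v' => exact absurd hlen (by simp [length, l.2.1])
    | inr l' =>
      cases q with
      | inl w =>
        cases q' with
        | inl w' =>
          refine ⟨heq, ?_⟩
          have heq' : (Sum.inr l : GPath G) = Sum.inr l' := heq
          have h1 : rng (Sum.inr l : GPath G) = w := h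
          have h2 : rng (Sum.inr l' : GPath G) = w' := h'
          rw [heq'] at h1
          rw [h1] at h2
          rw [h2]
        | inr m' =>
          exfalso
          have : (m'.1).length ≠ 0 := fun hh => m'.2.1 (List.length_eq_zero_iff.mp hh)
          exact this (by simpa [length] using hlen2.symm)
      | inr m =>
        cases q' with
        | inl w' =>
          exfalso
          have : (m.1).length ≠ 0 := fun hh => m.2.1 (List.length_eq_zero_iff.mp hh)
          exact this (by simpa [length] using hlen2)
        | inr m' =>
          have hl : l.1 ++ m.1 = l'.1 ++ m'.1 := by
            have h5 : (Sum.inr ⟨l.1 ++ m.1, _⟩ : GPath G) = Sum.inr ⟨l'.1 ++ m'.1, _⟩ := heq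
            exact congrArg Subtype.val (Sum.inr.inj h5)
          obtain ⟨e1, e2⟩ := List.append_inj hl hlen
          exact ⟨congrArg Sum.inr (Subtype.ext e1), congrArg Sum.inr (Subtype.ext e2)⟩

lemma comp_inj_right {p p' q : GPath G} (h : p.rng = q.src) (h' : p'.rng = q.src)
    (heq : p.comp q h = p'.comp q h') : p = p' := by
  have hlen : p.length = p'.length := by
    have := congrArg length heq
    rw [length_comp, length_comp] at this
    omega
  exact (comp_inj h h' hlen heq).1

lemma comp_inl_right (p : GPath G) (v : G.V) (h : p.rng = src (Sum.inl v : GPath G)) :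
    p.comp (Sum.inl v) h = p := by
  cases p with
  | inl u => exact congrArg Sum.inl (show (u:G.V) = v from h).symm
  | inr l => rfl

end GPath

def Reach (G : DGraph) (a b : G.V) : Prop :=
  ∃ q : GPath G, q.src = a ∧ q.rng = b

lemma Reach.refl {G : DGraph} (a : G.V) : Reach G a a :=
  ⟨Sum.inl a, rfl, rfl⟩

lemma Reach.trans {G : DGraph} {a b c : G.V} (h1 : Reach G a b) (h2 : Reach G b c) :
    Reach G a c := by
  obtain ⟨q1, rfl, rfl⟩ := h1
  obtain ⟨q2, hs, rfl⟩ := h2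
  exact ⟨q1.comp q2 hs.symm, by rw [GPath.src_comp], by rw [GPath.rng_comp]⟩

lemma noReturnPath_iff {G : DGraph} (p : GPath G) :
    G.NoReturnPath p ↔ 0 < p.length ∧ ¬ Reach G p.rng p.src := Iff.rfl

lemma NoReturnPath.comp_left {G : DGraph} {p q : GPath G} (h : p.rng = q.src)
    (hq : G.NoReturnPath q) : G.NoReturnPath (p.comp q h) := by
  refine ⟨by rw [GPath.length_comp]; have := hq.1; omega, ?_⟩
  rw [GPath.rng_comp, GPath.src_comp]
  rintro ⟨m, hms, hmr⟩
  exact hq.2 ⟨m.comp p (by rw [hmr]), by rw [GPath.src_comp]; exact hms,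
    by rw [GPath.rng_comp]; exact h⟩

lemma NoReturnPath.comp_right {G : DGraph} {p q : GPath G} (h : p.rng = q.src)
    (hp : G.NoReturnPath p) : G.NoReturnPath (p.comp q h) := by
  refine ⟨by rw [GPath.length_comp]; have := hp.1; omega, ?_⟩
  rw [GPath.rng_comp, GPath.src_comp]
  rintro ⟨m, hms, hmr⟩
  exact hp.2 ⟨q.comp m (by rw [hms]), by rw [GPath.src_comp]; exact h.symm,
    by rw [GPath.rng_comp]; exact hmr⟩


end DGraph

section AlgebraLemmas

open DGraph

variable {K : Type} [Field K] {G : DGraph} {A : Type} [NonUnitalRing A] [Module K A]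
  [SMulCommClass K A A] [IsScalarTower K A A] (PA : PathAlgebraOn K G A)

/-- The set of compositions of paths from `s` with paths from `t`. -/
def cset (s t : Set (GPath G)) : Set (GPath G) :=
  {x | ∃ p ∈ s, ∃ q ∈ t, ∃ h : p.rng = q.src, x = p.comp q h}

lemma mul_mem_span_cset {s t : Set (GPath G)} {x y : A}
    (hx : x ∈ Submodule.span K (PA.basis '' s))
    (hy : y ∈ Submodule.span K (PA.basis '' t)) :
    x * y ∈ Submodule.span K (PA.basis '' cset s t) := by
  induction hx using Submodule.span_induction with
  | mem x hx =>
    obtain ⟨p, hp, rfl⟩ := hx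
    induction hy using Submodule.span_induction with
    | mem y hy =>
      obtain ⟨q, hq, rfl⟩ := hy
      by_cases h : p.rng = q.src
      · rw [PA.mul_comp p q h]
        exact Submodule.subset_span ⟨_, ⟨p, hp, q, hq, h, rfl⟩, rfl⟩
      · rw [PA.mul_ncomp p q h]; exact zero_mem _
    | zero => rw [mul_zero]; exact zero_mem _
    | add y z _ _ hy hz => rw [mul_add]; exact add_mem hy hz
    | smul k y _ hy => rw [mul_smul_comm]; exact Submodule.smul_mem _ _ hy
  | zero => rw [zero_mul]; exact zero_mem _
  | add x y _ _ h1 h2 => rw [add_mul]; exact add_mem h1 h2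
  | smul k x _ h1 => rw [smul_mul_assoc]; exact Submodule.smul_mem _ _ h1

lemma mul_mem_span_of_cset_subset {s t w : Set (GPath G)} {x y : A}
    (hsub : cset s t ⊆ w)
    (hx : x ∈ Submodule.span K (PA.basis '' s))
    (hy : y ∈ Submodule.span K (PA.basis '' t)) :
    x * y ∈ Submodule.span K (PA.basis '' w) :=
  Submodule.span_mono (Set.image_mono hsub) (mul_mem_span_cset PA hx hy)

lemma mem_span_univ (x : A) : x ∈ Submodule.span K (PA.basis '' (Set.univ : Set (GPath G))) := by
  rw [Set.image_univ, PA.basis.span_eq]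
  trivial

lemma ov_mul (v : G.V) (p : GPath G) (h : p.src = v) :
    PA.basis (GPath.ofVertex v) * PA.basis p = PA.basis p :=
  PA.mul_comp (GPath.ofVertex v) p (by simpa [GPath.ofVertex] using h.symm)

lemma ov_mul_ne (v : G.V) (p : GPath G) (h : p.src ≠ v) :
    PA.basis (GPath.ofVertex v) * PA.basis p = 0 :=
  PA.mul_ncomp _ _ (by simpa [GPath.ofVertex] using fun hh => h hh.symm)

lemma mul_ov (v : G.V) (p : GPath G) (h : p.rng = v) :
    PA.basis p * PA.basis (GPath.ofVertex v) = PA.basis p := by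
  rw [PA.mul_comp p (GPath.ofVertex v) (by simpa [GPath.ofVertex] using h)]
  congr 1
  exact GPath.comp_inl_right p v _

lemma mul_ov_ne (v : G.V) (p : GPath G) (h : p.rng ≠ v) :
    PA.basis p * PA.basis (GPath.ofVertex v) = 0 :=
  PA.mul_ncomp _ _ (by simpa [GPath.ofVertex] using h)

lemma ov_mul_self (v : G.V) {x : A}
    (hx : x ∈ Submodule.span K (PA.basis '' {p : GPath G | p.src = v})) :
    PA.basis (GPath.ofVertex v) * x = x := by
  induction hx using Submodule.span_induction with
  | mem x hx => obtain ⟨p, hp, rfl⟩ := hx; exact ov_mul PA v p hp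
  | zero => rw [mul_zero]
  | add x y _ _ h1 h2 => rw [mul_add, h1, h2]
  | smul k x _ h1 => rw [mul_smul_comm, h1]

lemma mul_ov_self (v : G.V) {x : A}
    (hx : x ∈ Submodule.span K (PA.basis '' {p : GPath G | p.rng = v})) :
    x * PA.basis (GPath.ofVertex v) = x := by
  induction hx using Submodule.span_induction with
  | mem x hx => obtain ⟨p, hp, rfl⟩ := hx; exact mul_ov PA v p hp
  | zero => rw [zero_mul]
  | add x y _ _ h1 h2 => rw [add_mul, h1, h2]
  | smul k x _ h1 => rw [smul_mul_assoc, h1]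

end AlgebraLemmas

section Nilpotency

open DGraph

variable {K : Type} [Field K] {G : DGraph} {A : Type} [NonUnitalRing A] [Module K A]
  [SMulCommClass K A A] [IsScalarTower K A A] (PA : PathAlgebraOn K G A)

/-- `pw z n = z^(n+1)` in a nonunital ring. -/
def pw (z : A) : ℕ → A
  | 0 => z
  | n+1 => z * pw z n

@[simp] lemma pw_zero (z : A) : pw z 0 = z := rfl

lemma pw_succ_right (z : A) (n : ℕ) : pw z (n + 1) = pw z n * z := by
  induction n with
  | zero => rfl
  | succ n ih =>
    calc pw z (n + 2) = z * pw z (n + 1) := rfl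
    _ = z * (pw z n * z) := by rw [ih]
    _ = z * pw z n * z := (mul_assoc _ _ _).symm
    _ = pw z (n + 1) * z := rfl

lemma quasiReg_of_pw_eq_zero {z : A} {n : ℕ} (h : pw z n = 0) : QuasiReg A z := by
  have h2 : ∑ k ∈ Finset.range (n + 1), pw z (k + 1)
      = (∑ k ∈ Finset.range (n + 1), pw z k) + pw z (n + 1) - pw z 0 := by
    have a1 := Finset.sum_range_succ (fun k => pw z k) (n + 1)
    have a2 := Finset.sum_range_succ' (fun k => pw z k) (n + 1)
    rw [a1] at a2
    exact (eq_sub_of_add_eq a2.symm)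
  have h3 : pw z (n + 1) = 0 := by
    show z * pw z n = 0
    rw [h, mul_zero]
  rw [h3, pw_zero] at h2
  refine ⟨-(∑ k ∈ Finset.range (n + 1), pw z k), ?_, ?_⟩
  · have h1 : z * ∑ k ∈ Finset.range (n + 1), pw z k
        = ∑ k ∈ Finset.range (n + 1), pw z (k + 1) := by
      rw [Finset.mul_sum]; rfl
    rw [mul_neg, h1, h2]
    abel
  · have h1 : (∑ k ∈ Finset.range (n + 1), pw z k) * z
        = ∑ k ∈ Finset.range (n + 1), pw z (k + 1) := by
      rw [Finset.sum_mul]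
      exact Finset.sum_congr rfl fun k _ => (pw_succ_right z k).symm
    rw [neg_mul, h1, h2]
    abel

/-- The set of no-return paths whose "trace set" of vertices has `k` elements inside `W`. -/
def Ck (G : DGraph) (W : Finset G.V) (k : ℕ) : Set (GPath G) :=
  {p | G.NoReturnPath p ∧ ∃ S : Finset G.V, S.card = k ∧
    ∀ w ∈ S, w ∈ W ∧ Reach G p.src w ∧ ¬ Reach G p.rng w}

lemma cset_Ck_subset (W : Finset G.V) (j k : ℕ) :
    cset (Ck G W j) (Ck G W k) ⊆ Ck G W (j + k) := by
  classical
  rintro x ⟨p, ⟨hpnr, Sp, hSpcard, hSp⟩, q, ⟨hqnr, Sq, hSqcard, hSq⟩, h, rfl⟩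
  refine ⟨hqnr.comp_left h, Sp ∪ Sq, ?_, ?_⟩
  · rw [Finset.card_union_of_disjoint, hSpcard, hSqcard]
    rw [Finset.disjoint_left]
    intro w hwp hwq
    have h1 := (hSp w hwp).2.2
    have h2 := (hSq w hwq).2.1
    rw [← h] at h2
    exact h1 h2
  · intro w hw
    rw [GPath.src_comp, GPath.rng_comp]
    rcases Finset.mem_union.mp hw with hw | hw
    · refine ⟨(hSp w hw).1, (hSp w hw).2.1, fun hr => (hSp w hw).2.2 ?_⟩
      have hq2 : Reach G q.src w := Reach.trans ⟨q, rfl, rfl⟩ hr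
      rwa [← h] at hq2
    · exact ⟨(hSq w hw).1, Reach.trans ⟨p, rfl, h⟩ (hSq w hw).2.1, (hSq w hw).2.2⟩

end Nilpotency

section NSubJac

open DGraph

variable {K : Type} [Field K] {G : DGraph} {A : Type} [NonUnitalRing A] [Module K A]
  [SMulCommClass K A A] [IsScalarTower K A A] (PA : PathAlgebraOn K G A)

lemma pw_eq_zero_of_mem_nr {z : A}
    (hz : z ∈ Submodule.span K (PA.basis '' {p : GPath G | G.NoReturnPath p})) :
    ∃ n, pw z n = 0 := by
  classical
  set W : Finset G.V := (PA.basis.repr z).support.image GPath.src with hW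
  have hz1 : z ∈ Submodule.span K (PA.basis '' Ck G W 1) := by
    rw [Module.Basis.mem_span_image] at hz ⊢
    intro p hp
    have hnr : G.NoReturnPath p := hz hp
    refine ⟨hnr, {GPath.src p}, Finset.card_singleton _, ?_⟩
    intro w hw
    rw [Finset.mem_singleton] at hw
    subst hw
    exact ⟨Finset.mem_image_of_mem _ hp, Reach.refl _, hnr.2⟩
  have hpow : ∀ k, pw z k ∈ Submodule.span K (PA.basis '' Ck G W (k + 1)) := by
    intro k
    induction k with
    | zero => exact hz1
    | succ k ih =>
      have hm := mul_mem_span_cset PA hz1 ih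
      refine Submodule.span_mono (Set.image_mono ?_) hm
      have hsub := cset_Ck_subset (G := G) W 1 (k + 1)
      rwa [show 1 + (k + 1) = k + 1 + 1 by omega] at hsub
  refine ⟨W.card, ?_⟩
  have hempty : Ck G W (W.card + 1) = ∅ := by
    ext p
    simp only [Set.mem_empty_iff_false, iff_false]
    rintro ⟨-, S, hcard, hS⟩
    have hsub : S ⊆ W := fun w hw => (hS w hw).1
    have := Finset.card_le_card hsub
    omega
  have hfin := hpow W.card
  rw [hempty] at hfin
  simpa using hfin

lemma nr_subset_jacRad :
    (Submodule.span K (PA.basis '' {p : GPath G | G.NoReturnPath p}) : Set A) ⊆ jacRad A := by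
  intro z hz a b
  rw [SetLike.mem_coe] at hz
  have h1 : a * z ∈ Submodule.span K (PA.basis '' {p : GPath G | G.NoReturnPath p}) := by
    refine mul_mem_span_of_cset_subset PA ?_ (mem_span_univ PA a) hz
    rintro x ⟨p, -, q, hq, h, rfl⟩
    exact NoReturnPath.comp_left h hq
  have h2 : (a * z) * b ∈
      Submodule.span K (PA.basis '' {p : GPath G | G.NoReturnPath p}) := by
    refine mul_mem_span_of_cset_subset PA ?_ h1 (mem_span_univ PA b)
    rintro x ⟨p, hp, q, -, h, rfl⟩
    exact NoReturnPath.comp_right h hp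
  obtain ⟨n, hn⟩ := pw_eq_zero_of_mem_nr PA h2
  exact quasiReg_of_pw_eq_zero hn

end NSubJac

section Coefficients

open DGraph

variable {K : Type} [Field K] {G : DGraph} {A : Type} [NonUnitalRing A] [Module K A]
  [SMulCommClass K A A] [IsScalarTower K A A] (PA : PathAlgebraOn K G A)

lemma comp_inr_ne_inl {l} {q : DGraph.GPath G} (h) (v : G.V) :
    (GPath.comp (Sum.inr l) q h) ≠ Sum.inl v := by
  cases q with
  | inl w => simp [GPath.comp]; exact Sum.inr_ne_inl
  | inr m => simp [GPath.comp]; exact Sum.inr_ne_inl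

lemma basis_sum_repr (x : A) :
    ∑ p ∈ (PA.basis.repr x).support, PA.basis.repr x p • PA.basis p = x := by
  conv_rhs => rw [← PA.basis.linearCombination_repr x]
  rw [Finsupp.linearCombination_apply, Finsupp.sum]

lemma repr_inl_mul_left (v : G.V) {x : A} (y : A)
    (hx : x ∈ Submodule.span K (PA.basis '' {p : GPath G | p.src = v ∧ p.rng = v})) :
    PA.basis.repr (x * y) (Sum.inl v) =
      PA.basis.repr x (Sum.inl v) * PA.basis.repr y (Sum.inl v) := by
  induction hx using Submodule.span_induction with
  | mem x hx =>
    obtain ⟨p, hp, rfl⟩ := hx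
    have hy := mem_span_univ PA y
    induction hy using Submodule.span_induction with
    | mem y hy =>
      obtain ⟨q, -, rfl⟩ := hy
      cases p with
      | inl u =>
        have hu : u = v := hp.1
        subst hu
        by_cases h : GPath.src q = u
        · rw [show PA.basis (Sum.inl u) * PA.basis q = PA.basis q from
            ov_mul PA u q h]
          erw [PA.basis.repr_self, PA.basis.repr_self, Finsupp.single_eq_same, one_mul]
        · rw [show PA.basis (Sum.inl u) * PA.basis q = 0 from ov_mul_ne PA u q h]
          have hq : q ≠ Sum.inl u := fun hh => h (by rw [hh]; rfl)
          simp [Module.Basis.repr_self, Finsupp.single_eq_of_ne' hq]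
          rfl
      | inr l =>
        have h1 : PA.basis.repr (PA.basis (Sum.inr l)) (Sum.inl v) = 0 := by
          erw [PA.basis.repr_self, Finsupp.single_eq_of_ne' Sum.inr_ne_inl]
        rw [h1, zero_mul]
        by_cases h : GPath.rng (Sum.inr l : GPath G) = GPath.src q
        · rw [PA.mul_comp _ _ h, PA.basis.repr_self]
          exact Finsupp.single_eq_of_ne' (comp_inr_ne_inl h v)
        · rw [PA.mul_ncomp _ _ h, map_zero]
          rfl
    | zero => simp; exact (mul_zero _).symm
    | add y z _ _ h1 h2 => erw [mul_add, map_add, Finsupp.add_apply, h1, h2, map_add,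
        Finsupp.add_apply, mul_add]
    | smul k y _ h1 => erw [mul_smul_comm, map_smul, Finsupp.smul_apply, h1, map_smul,
        Finsupp.smul_apply, smul_eq_mul, smul_eq_mul]; ring
  | zero => simp; exact (zero_mul _).symm
  | add x y _ _ h1 h2 => erw [add_mul, map_add, Finsupp.add_apply, h1, h2, map_add,
      Finsupp.add_apply, add_mul]
  | smul k x _ h1 => erw [smul_mul_assoc, map_smul, Finsupp.smul_apply, h1, map_smul,
      Finsupp.smul_apply, smul_eq_mul, smul_eq_mul]; ring

lemma repr_inl_mul_right (v : G.V) {y : A} (x : A)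
    (hy : y ∈ Submodule.span K (PA.basis '' {p : GPath G | p.src = v ∧ p.rng = v})) :
    PA.basis.repr (x * y) (Sum.inl v) =
      PA.basis.repr x (Sum.inl v) * PA.basis.repr y (Sum.inl v) := by
  induction hy using Submodule.span_induction with
  | mem y hy =>
    obtain ⟨q, hq, rfl⟩ := hy
    have hx := mem_span_univ PA x
    induction hx using Submodule.span_induction with
    | mem x hx =>
      obtain ⟨p, -, rfl⟩ := hx
      cases q with
      | inl u =>
        have hu : u = v := hq.1
        subst hu
        by_cases h : GPath.rng p = u
        · rw [show PA.basis p * PA.basis (Sum.inl u) = PA.basis p from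
            mul_ov PA u p h]
          erw [PA.basis.repr_self, PA.basis.repr_self, Finsupp.single_eq_same, mul_one]
        · rw [show PA.basis p * PA.basis (Sum.inl u) = 0 from mul_ov_ne PA u p h]
          have hp2 : p ≠ Sum.inl u := fun hh => h (by rw [hh]; rfl)
          simp [Module.Basis.repr_self, Finsupp.single_eq_of_ne' hp2]
          rfl
      | inr m =>
        have h1 : PA.basis.repr (PA.basis (Sum.inr m)) (Sum.inl v) = 0 := by
          erw [PA.basis.repr_self, Finsupp.single_eq_of_ne' Sum.inr_ne_inl]
        rw [h1, mul_zero]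
        by_cases h : GPath.rng p = GPath.src (Sum.inr m : GPath G)
        · rw [PA.mul_comp _ _ h, PA.basis.repr_self]
          cases p with
          | inl w => exact Finsupp.single_eq_of_ne' (by simp [GPath.comp]; exact Sum.inr_ne_inl)
          | inr l => exact Finsupp.single_eq_of_ne' (comp_inr_ne_inl h v)

        · rw [PA.mul_ncomp _ _ h, map_zero]
          rfl
    | zero => simp; exact (zero_mul _).symm
    | add x z _ _ h1 h2 => erw [add_mul, map_add, Finsupp.add_apply, h1, h2, map_add,
        Finsupp.add_apply, add_mul]
    | smul k x _ h1 => erw [smul_mul_assoc, map_smul, Finsupp.smul_apply, h1, map_smul,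
        Finsupp.smul_apply, smul_eq_mul, smul_eq_mul]; ring
  | zero => simp; exact (mul_zero _).symm
  | add y z _ _ h1 h2 => erw [mul_add, map_add, Finsupp.add_apply, h1, h2, map_add,
      Finsupp.add_apply, mul_add]
  | smul k y _ h1 => erw [mul_smul_comm, map_smul, Finsupp.smul_apply, h1, map_smul,
      Finsupp.smul_apply, smul_eq_mul, smul_eq_mul]; ring

end Coefficients

section TopCoeff

open DGraph

variable {K : Type} [Field K] {G : DGraph} {A : Type} [NonUnitalRing A] [Module K A]
  [SMulCommClass K A A] [IsScalarTower K A A] (PA : PathAlgebraOn K G A)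

lemma mul_expand (x y : A) :
    x * y = ∑ p ∈ (PA.basis.repr x).support, ∑ q ∈ (PA.basis.repr y).support,
      (PA.basis.repr x p * PA.basis.repr y q) • (PA.basis p * PA.basis q) := by
  conv_lhs => rw [← basis_sum_repr PA x, ← basis_sum_repr PA y]
  rw [Finset.sum_mul]
  refine Finset.sum_congr rfl fun p _ => ?_
  rw [smul_mul_assoc, Finset.mul_sum, Finset.smul_sum]
  refine Finset.sum_congr rfl fun q _ => ?_
  rw [mul_smul_comm, smul_smul]

lemma repr_mul_top {x y : A} {p₀ q₀ : GPath G}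
    (hp₀ : p₀ ∈ (PA.basis.repr x).support) (hq₀ : q₀ ∈ (PA.basis.repr y).support)
    (hDx : ∀ p ∈ (PA.basis.repr x).support, GPath.length p ≤ p₀.length)
    (hDy : ∀ q ∈ (PA.basis.repr y).support, GPath.length q ≤ q₀.length)
    (h : p₀.rng = q₀.src) :
    PA.basis.repr (x * y) (p₀.comp q₀ h) =
      PA.basis.repr x p₀ * PA.basis.repr y q₀ := by
  classical
  have key : ∀ p ∈ (PA.basis.repr x).support, ∀ q ∈ (PA.basis.repr y).support,
      ¬(p = p₀ ∧ q = q₀) →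
      PA.basis.repr (PA.basis p * PA.basis q) (p₀.comp q₀ h) = 0 := by
    intro p hp q hq hne
    by_cases hcomp : GPath.rng p = GPath.src q
    · rw [PA.mul_comp _ _ hcomp, PA.basis.repr_self]
      refine Finsupp.single_eq_of_ne' fun heq => ?_
      have hlensum := congrArg GPath.length heq
      rw [GPath.length_comp, GPath.length_comp] at hlensum
      have hlp := hDx p hp
      have hlq := hDy q hq
      have hlen : GPath.length p = GPath.length p₀ := by omega
      exact hne (GPath.comp_inj hcomp h hlen heq)
    · rw [PA.mul_ncomp _ _ hcomp, map_zero]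
      rfl
  rw [mul_expand PA x y, map_sum, Finset.sum_apply']
  rw [Finset.sum_eq_single p₀]
  · rw [map_sum, Finset.sum_apply', Finset.sum_eq_single q₀]
    · rw [map_smul, Finsupp.smul_apply, PA.mul_comp _ _ h, PA.basis.repr_self,
        Finsupp.single_eq_same, smul_eq_mul, mul_one]
    · intro q hq hne
      rw [map_smul, Finsupp.smul_apply, key p₀ hp₀ q hq (fun hh => hne hh.2), smul_zero]
    · intro habs
      exact absurd hq₀ habs
  · intro p hp hne
    rw [map_sum, Finset.sum_apply']
    refine Finset.sum_eq_zero fun q hq => ?_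
    rw [map_smul, Finsupp.smul_apply, key p hp q hq (fun hh => hne hh.1), smul_zero]
  · intro habs
    exact absurd hp₀ habs

end TopCoeff

section Vanish

open DGraph

variable {K : Type} [Field K] {G : DGraph} {A : Type} [NonUnitalRing A] [Module K A]
  [SMulCommClass K A A] [IsScalarTower K A A] (PA : PathAlgebraOn K G A)

lemma vanish (v : G.V) {t : A}
    (ht : t ∈ Submodule.span K (PA.basis '' {p : GPath G | p.src = v ∧ p.rng = v}))
    (hqr : ∀ k : K, QuasiReg A (k • t)) : t = 0 := by
  classical
  by_contra htne
  -- the trivial-path coefficient of t vanishes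
  have hεt : PA.basis.repr t (Sum.inl v) = 0 := by
    by_contra hc
    obtain ⟨w, hw1, -⟩ := hqr ((PA.basis.repr t (Sum.inl v))⁻¹)
    have e1 := congrArg (fun x : A => PA.basis.repr x (Sum.inl v)) hw1
    simp only [map_sub, map_add, Finsupp.sub_apply, Finsupp.add_apply, map_zero,
      Finsupp.coe_zero, Pi.zero_apply] at e1
    erw [Finsupp.sub_apply, Finsupp.add_apply, repr_inl_mul_left PA v w (Submodule.smul_mem _ _ ht)] at e1
    erw [map_smul, Finsupp.smul_apply, smul_eq_mul, inv_mul_cancel₀ hc] at e1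
    rw [one_mul, add_sub_cancel_right] at e1
    exact one_ne_zero e1
  -- set up the sandwiched quasi-inverse for k = 1
  obtain ⟨w, hw1, -⟩ := hqr 1
  rw [one_smul] at hw1
  have ht_src : t ∈ Submodule.span K (PA.basis '' {p : GPath G | p.src = v}) :=
    Submodule.span_mono (Set.image_mono (fun p hp => hp.1)) ht
  have ht_rng : t ∈ Submodule.span K (PA.basis '' {p : GPath G | p.rng = v}) :=
    Submodule.span_mono (Set.image_mono (fun p hp => hp.2)) ht
  have h_et : PA.basis (GPath.ofVertex v) * t = t := ov_mul_self PA v ht_src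
  have h_te : t * PA.basis (GPath.ofVertex v) = t := mul_ov_self PA v ht_rng
  have he_mem : PA.basis (GPath.ofVertex v)
      ∈ Submodule.span K (PA.basis '' ({Sum.inl v} : Set (GPath G))) :=
    Submodule.subset_span ⟨Sum.inl v, rfl, rfl⟩
  have hu_mem : PA.basis (GPath.ofVertex v) * w * PA.basis (GPath.ofVertex v)
      ∈ Submodule.span K (PA.basis '' {p : GPath G | p.src = v ∧ p.rng = v}) := by
    have h1 : PA.basis (GPath.ofVertex v) * w
        ∈ Submodule.span K (PA.basis '' {p : GPath G | p.src = v}) := by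
      refine mul_mem_span_of_cset_subset PA ?_ he_mem (mem_span_univ PA w)
      rintro x ⟨p, hp, q, -, hcomp, rfl⟩
      erw [Set.mem_singleton_iff] at hp
      subst hp
      erw [Set.mem_setOf_eq, GPath.src_comp]
      rfl
    refine mul_mem_span_of_cset_subset PA ?_ h1 he_mem
    rintro x ⟨p, hp, q, hq, hcomp, rfl⟩
    erw [Set.mem_singleton_iff] at hq
    subst hq
    exact ⟨by erw [GPath.src_comp]; exact hp, by erw [GPath.rng_comp]; rfl⟩
  have E1 : t + PA.basis (GPath.ofVertex v) * w * PA.basis (GPath.ofVertex v)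
      - t * (PA.basis (GPath.ofVertex v) * w * PA.basis (GPath.ofVertex v)) = 0 := by
    have c1 := congrArg
      (fun x : A => PA.basis (GPath.ofVertex v) * (x * PA.basis (GPath.ofVertex v))) hw1
    simp only [add_mul, sub_mul, mul_add, mul_sub, mul_zero, zero_mul, ← mul_assoc] at c1
    rw [h_et] at c1
    rw [h_te] at c1
    rw [show t * (PA.basis (GPath.ofVertex v) * w * PA.basis (GPath.ofVertex v))
      = t * PA.basis (GPath.ofVertex v) * w * PA.basis (GPath.ofVertex v) by
        rw [← mul_assoc, ← mul_assoc]]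
    rw [h_te]
    exact c1
  -- the trivial-path coefficient of u vanishes
  have hεu : PA.basis.repr
      (PA.basis (GPath.ofVertex v) * w * PA.basis (GPath.ofVertex v)) (Sum.inl v) = 0 := by
    have e2 := congrArg (fun x : A => PA.basis.repr x (Sum.inl v)) E1
    simp only [map_sub, map_add, Finsupp.sub_apply, Finsupp.add_apply, map_zero,
      Finsupp.coe_zero, Pi.zero_apply] at e2
    erw [Finsupp.sub_apply, Finsupp.add_apply, repr_inl_mul_left PA v _ ht] at e2
    rw [hεt, zero_add, zero_mul, sub_zero] at e2
    exact e2
  have hune : PA.basis (GPath.ofVertex v) * w * PA.basis (GPath.ofVertex v) ≠ 0 := by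
    intro h0
    rw [h0, mul_zero, add_zero, sub_zero] at E1
    exact htne E1
  -- supports and maximal-length elements
  have hFt := PA.basis.mem_span_image.mp ht
  have hFu := PA.basis.mem_span_image.mp hu_mem
  have hTne : (PA.basis.repr t).support.Nonempty :=
    Finsupp.support_nonempty_iff.mpr (fun hh => htne (PA.basis.repr.map_eq_zero_iff.mp hh))
  have hUne : (PA.basis.repr
      (PA.basis (GPath.ofVertex v) * w * PA.basis (GPath.ofVertex v))).support.Nonempty :=
    Finsupp.support_nonempty_iff.mpr (fun hh => hune (PA.basis.repr.map_eq_zero_iff.mp hh))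
  obtain ⟨p₀, hp₀, hp₀max⟩ := Finset.exists_max_image _ GPath.length hTne
  obtain ⟨q₀, hq₀, hq₀max⟩ := Finset.exists_max_image _ GPath.length hUne
  have hp₀cl : GPath.src p₀ = v ∧ GPath.rng p₀ = v := hFt (Finset.mem_coe.mpr hp₀)
  have hq₀cl : GPath.src q₀ = v ∧ GPath.rng q₀ = v := hFu (Finset.mem_coe.mpr hq₀)
  have hp₀len : 1 ≤ GPath.length p₀ := by
    rcases Nat.eq_zero_or_pos (GPath.length p₀) with h0 | h1
    · exfalso
      have h2 := GPath.eq_inl_of_length_eq_zero h0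
      rw [hp₀cl.1] at h2
      rw [h2] at hp₀
      exact (Finsupp.mem_support_iff.mp hp₀) hεt
    · exact h1
  have hq₀len : 1 ≤ GPath.length q₀ := by
    rcases Nat.eq_zero_or_pos (GPath.length q₀) with h0 | h1
    · exfalso
      have h2 := GPath.eq_inl_of_length_eq_zero h0
      rw [hq₀cl.1] at h2
      rw [h2] at hq₀
      exact (Finsupp.mem_support_iff.mp hq₀) hεu
    · exact h1
  have hcp : GPath.rng p₀ = GPath.src q₀ := by rw [hp₀cl.2, hq₀cl.1]
  have htop := repr_mul_top PA hp₀ hq₀ hp₀max hq₀max hcp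
  have hne0 : PA.basis.repr t p₀ * PA.basis.repr
      (PA.basis (GPath.ofVertex v) * w * PA.basis (GPath.ofVertex v)) q₀ ≠ 0 :=
    mul_ne_zero (Finsupp.mem_support_iff.mp hp₀) (Finsupp.mem_support_iff.mp hq₀)
  have hsum : t + PA.basis (GPath.ofVertex v) * w * PA.basis (GPath.ofVertex v)
      = t * (PA.basis (GPath.ofVertex v) * w * PA.basis (GPath.ofVertex v)) :=
    sub_eq_zero.mp E1
  rw [← hsum] at htop
  have hc_t : PA.basis.repr t (GPath.comp p₀ q₀ hcp) = 0 := by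
    by_contra hcc
    have hmem := Finsupp.mem_support_iff.mpr hcc
    have hle := hp₀max _ hmem
    rw [GPath.length_comp] at hle
    omega
  have hc_u : PA.basis.repr
      (PA.basis (GPath.ofVertex v) * w * PA.basis (GPath.ofVertex v))
      (GPath.comp p₀ q₀ hcp) = 0 := by
    by_contra hcc
    have hmem := Finsupp.mem_support_iff.mpr hcc
    have hle := hq₀max _ hmem
    rw [GPath.length_comp] at hle
    omega
  rw [map_add, Finsupp.add_apply, hc_t, hc_u, add_zero] at htop
  exact hne0 htop.symm

end Vanish

section JacSubN

open DGraph

variable {K : Type} [Field K] {G : DGraph} {A : Type} [NonUnitalRing A] [Module K A]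
  [SMulCommClass K A A] [IsScalarTower K A A] (PA : PathAlgebraOn K G A)

lemma coeff_extract (v w' : G.V) (q : GPath G) (hqs : GPath.src q = w') (hqr : GPath.rng q = v)
    (p : GPath G) (hps : GPath.src p = v) (hpr : GPath.rng p = w') (x : A) :
    PA.basis.repr
      (PA.basis (GPath.ofVertex v) * x * PA.basis (GPath.ofVertex w') * PA.basis q)
      (GPath.comp p q (by rw [hpr, hqs])) = PA.basis.repr x p := by
  classical
  have hx := mem_span_univ PA x
  induction hx using Submodule.span_induction with
  | mem x hx =>
    obtain ⟨p', -, rfl⟩ := hx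
    by_cases h1 : GPath.src p' = v
    · by_cases h2 : GPath.rng p' = w'
      · rw [ov_mul PA v p' h1, mul_ov PA w' p' h2]
        have hcomp : GPath.rng p' = GPath.src q := by rw [h2, hqs]
        rw [PA.mul_comp p' q hcomp, PA.basis.repr_self, PA.basis.repr_self]
        by_cases h3 : p' = p
        · subst h3
          have hpr2 : (GPath.comp p' q (show GPath.rng p' = GPath.src q by rw [hpr, hqs]))
              = GPath.comp p' q hcomp := rfl
          rw [hpr2, Finsupp.single_eq_same, Finsupp.single_eq_same]
        · rw [Finsupp.single_eq_of_ne' h3]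
          refine Finsupp.single_eq_of_ne' fun heq => ?_
          exact h3 (GPath.comp_inj_right hcomp (by rw [hpr, hqs]) heq)
      · rw [ov_mul PA v p' h1, mul_ov_ne PA w' p' h2, zero_mul, map_zero]
        rw [PA.basis.repr_self]
        rw [Finsupp.single_eq_of_ne' fun heq => h2 (by rw [heq, hpr])]
        rfl
    · rw [ov_mul_ne PA v p' h1, zero_mul, zero_mul, map_zero]
      rw [PA.basis.repr_self]
      rw [Finsupp.single_eq_of_ne' fun heq => h1 (by rw [heq, hps])]
      rfl
  | zero => simp
  | add x y _ _ hx hy =>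
    rw [mul_add, add_mul, add_mul, map_add, Finsupp.add_apply, hx, hy, map_add,
      Finsupp.add_apply]
  | smul k x _ hx =>
    rw [mul_smul_comm, smul_mul_assoc, smul_mul_assoc, map_smul, Finsupp.smul_apply, hx,
      map_smul, Finsupp.smul_apply]

lemma jacRad_subset_nr :
    jacRad A ⊆ (Submodule.span K (PA.basis '' {p : GPath G | G.NoReturnPath p}) : Set A) := by
  intro z hz
  rw [SetLike.mem_coe, PA.basis.mem_span_image]
  intro p hp
  rw [Finset.mem_coe] at hp
  by_contra hnp
  obtain ⟨q, hqs, hqr⟩ : ∃ q : GPath G, GPath.src q = GPath.rng p ∧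
      GPath.rng q = GPath.src p := by
    by_cases hl : GPath.length p = 0
    · have h2 := GPath.eq_inl_of_length_eq_zero hl
      have h3 : GPath.rng p = GPath.src p := by rw [h2]; rfl
      exact ⟨Sum.inl (GPath.src p), h3.symm, rfl⟩
    · have hnp' : ¬ (0 < GPath.length p ∧ ¬ ∃ q : GPath G,
          GPath.src q = GPath.rng p ∧ GPath.rng q = GPath.src p) := hnp
      push_neg at hnp'
      exact hnp' (Nat.pos_of_ne_zero hl)
  have he_mem : PA.basis (GPath.ofVertex (GPath.src p))
      ∈ Submodule.span K (PA.basis '' ({Sum.inl (GPath.src p)} : Set (GPath G))) :=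
    Submodule.subset_span ⟨Sum.inl (GPath.src p), rfl, rfl⟩
  have hq_mem : PA.basis q ∈ Submodule.span K (PA.basis '' ({q} : Set (GPath G))) :=
    Submodule.subset_span ⟨q, rfl, rfl⟩
  have hw_mem : PA.basis (GPath.ofVertex (GPath.rng p))
      ∈ Submodule.span K (PA.basis '' ({Sum.inl (GPath.rng p)} : Set (GPath G))) :=
    Submodule.subset_span ⟨Sum.inl (GPath.rng p), rfl, rfl⟩
  have s1 : PA.basis (GPath.ofVertex (GPath.src p)) * z
      ∈ Submodule.span K (PA.basis '' {p' : GPath G | GPath.src p' = GPath.src p}) := by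
    refine mul_mem_span_of_cset_subset PA ?_ he_mem (mem_span_univ PA z)
    rintro x ⟨p', hp', q', -, hcomp, rfl⟩
    erw [Set.mem_singleton_iff] at hp'
    subst hp'
    erw [Set.mem_setOf_eq, GPath.src_comp]
    rfl
  have s2 : PA.basis (GPath.ofVertex (GPath.src p)) * z
        * PA.basis (GPath.ofVertex (GPath.rng p))
      ∈ Submodule.span K (PA.basis '' {p' : GPath G | GPath.src p' = GPath.src p}) := by
    refine mul_mem_span_of_cset_subset PA ?_ s1 hw_mem
    rintro x ⟨p', hp', q', -, hcomp, rfl⟩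
    rw [Set.mem_setOf_eq, GPath.src_comp]
    exact hp'
  have s3 : PA.basis (GPath.ofVertex (GPath.src p)) * z
        * PA.basis (GPath.ofVertex (GPath.rng p)) * PA.basis q
      ∈ Submodule.span K (PA.basis ''
        {p' : GPath G | GPath.src p' = GPath.src p ∧ GPath.rng p' = GPath.src p}) := by
    refine mul_mem_span_of_cset_subset PA ?_ s2 hq_mem
    rintro x ⟨p', hp', q', hq', hcomp, rfl⟩
    rw [Set.mem_singleton_iff] at hq'
    subst hq'
    exact ⟨by rw [GPath.src_comp]; exact hp', by rw [GPath.rng_comp]; exact hqr⟩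
  have hqreg : ∀ k : K, QuasiReg A (k • (PA.basis (GPath.ofVertex (GPath.src p)) * z
      * PA.basis (GPath.ofVertex (GPath.rng p)) * PA.basis q)) := by
    intro k
    have h4 := hz (k • PA.basis (GPath.ofVertex (GPath.src p)))
      (PA.basis (GPath.ofVertex (GPath.rng p)) * PA.basis q)
    rwa [smul_mul_assoc, smul_mul_assoc, ← mul_assoc] at h4
  have ht0 := vanish PA (GPath.src p) s3 hqreg
  have hco := coeff_extract PA (GPath.src p) (GPath.rng p) q hqs hqr p rfl rfl z
  rw [ht0, map_zero] at hco
  simp only [Finsupp.coe_zero, Pi.zero_apply] at hco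
  exact (Finsupp.mem_support_iff.mp hp) hco.symm

end JacSubN

section Ideal

open DGraph

variable {K : Type} [Field K] {G : DGraph} {A : Type} [NonUnitalRing A] [Module K A]
  [SMulCommClass K A A] [IsScalarTower K A A] (PA : PathAlgebraOn K G A)

lemma ofEdge_noReturnPath {e : G.Edge} (he : G.NoReturnEdge e) :
    G.NoReturnPath (GPath.ofEdge e) := by
  refine ⟨by simp [GPath.ofEdge, GPath.length], ?_⟩
  rintro ⟨q, hq1, hq2⟩
  exact he ⟨q, hq1, hq2⟩

lemma list_return : ∀ (l : List G.Edge) (hne : l ≠ []) (_ : G.IsComposable l),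
    (∀ e ∈ l, ∃ q : GPath G, GPath.src q = G.r e ∧ GPath.rng q = G.s e) →
    ∃ q : GPath G, GPath.src q = G.r (l.getLast hne) ∧ GPath.rng q = G.s (l.head hne)
  | [], hne, _, _ => absurd rfl hne
  | [e], _, _, h => by simpa using h e (by simp)
  | e :: f :: rest, _, hc, h => by
    have hc' : G.IsComposable (f :: rest) := hc.tail
    have hef : G.r e = G.s f := (List.isChain_cons_cons.mp hc).1
    obtain ⟨q', hq1, hq2⟩ := list_return (f :: rest) (by simp) hc'
      (fun e' he' => h e' (by simp [he']))
    obtain ⟨m, hm1, hm2⟩ := h e (by simp)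
    refine ⟨q'.comp m ?_, ?_, ?_⟩
    · rw [hq2, hm1, hef]
      rfl
    · rw [GPath.src_comp, hq1]
      exact congrArg G.r (List.getLast_cons (by simp)).symm
    · rw [GPath.rng_comp, hm2]
      rfl

lemma exists_factor {p : GPath G} (hp : G.NoReturnPath p) :
    ∃ (e : G.Edge) (x y : A), G.NoReturnEdge e ∧
      PA.basis p = x * PA.basis (GPath.ofEdge e) * y := by
  classical
  obtain ⟨l, rfl⟩ : ∃ l, p = Sum.inr l := by
    cases p with
    | inl v => exact absurd hp.1 (by simp)
    | inr l => exact ⟨l, rfl⟩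
  have hex : ∃ e ∈ l.1, G.NoReturnEdge e := by
    by_contra hall
    push_neg at hall
    have hret : ∀ e ∈ l.1, ∃ q : GPath G, GPath.src q = G.r e ∧ GPath.rng q = G.s e :=
      fun e he => not_not.mp (hall e he)
    obtain ⟨q, hr1, hr2⟩ := list_return l.1 l.2.1 l.2.2 hret
    exact hp.2 ⟨q, hr1, hr2⟩
  obtain ⟨e, he, hnre⟩ := hex
  obtain ⟨l₁, l₂, hsplit⟩ := List.append_of_mem he
  have hc_full : (l₁ ++ e :: l₂).IsChain (fun a b => G.r a = G.s b) := by
    rw [← hsplit]; exact l.2.2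
  rw [List.isChain_append] at hc_full
  obtain ⟨hc1, hc2, hmid⟩ := hc_full
  have hc2' : l₂.IsChain (fun a b => G.r a = G.s b) := hc2.tail
  have hheade : ∀ y ∈ l₂.head?, G.r e = G.s y := (List.isChain_cons.mp hc2).1
  by_cases h1 : l₁ = []
  · subst h1
    by_cases h2 : l₂ = []
    · subst h2
      refine ⟨e, PA.basis (GPath.ofVertex (G.s e)), PA.basis (GPath.ofVertex (G.r e)),
        hnre, ?_⟩
      have hpe : (Sum.inr l : GPath G) = GPath.ofEdge e :=
        congrArg Sum.inr (Subtype.ext (by simpa using hsplit))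
      rw [hpe, ov_mul PA (G.s e) (GPath.ofEdge e) rfl, mul_ov PA (G.r e) (GPath.ofEdge e) rfl]
    · refine ⟨e, PA.basis (GPath.ofVertex (G.s e)), PA.basis (Sum.inr ⟨l₂, h2, hc2'⟩),
        hnre, ?_⟩
      have hmc : GPath.rng (GPath.ofEdge e)
          = GPath.src (Sum.inr ⟨l₂, h2, hc2'⟩ : GPath G) := by
        show G.r e = G.s (l₂.head h2)
        exact hheade _ (List.head?_eq_head h2)
      have hprod : PA.basis (GPath.ofEdge e) * PA.basis (Sum.inr ⟨l₂, h2, hc2'⟩ : GPath G)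
          = PA.basis (Sum.inr l) := by
        rw [PA.mul_comp _ _ hmc]
        exact congrArg PA.basis (congrArg Sum.inr (Subtype.ext (by simpa using hsplit.symm)))
      rw [ov_mul PA (G.s e) (GPath.ofEdge e) rfl, hprod]
  · have hmid1 : G.r (l₁.getLast h1) = G.s e :=
      hmid _ (List.getLast?_eq_getLast h1) e rfl
    have hcomb : (l₁ ++ [e]).IsChain (fun a b => G.r a = G.s b) := by
      rw [List.isChain_append]
      refine ⟨hc1, List.isChain_singleton e, fun x hx y hy => ?_⟩
      rw [List.head?_cons, Option.mem_some_iff] at hy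
      subst hy
      rw [List.getLast?_eq_getLast h1, Option.mem_some_iff] at hx
      subst hx
      exact hmid1
    have hx1 : PA.basis (Sum.inr ⟨l₁, h1, hc1⟩ : GPath G) * PA.basis (GPath.ofEdge e)
        = PA.basis (Sum.inr ⟨l₁ ++ [e], by simp, hcomb⟩ : GPath G) := by
      rw [PA.mul_comp _ _ (show GPath.rng (Sum.inr ⟨l₁, h1, hc1⟩ : GPath G)
        = GPath.src (GPath.ofEdge e) from hmid1)]
      exact congrArg PA.basis (congrArg Sum.inr (Subtype.ext rfl))
    have hrng_pe1 : GPath.rng (Sum.inr ⟨l₁ ++ [e], by simp, hcomb⟩ : GPath G) = G.r e := by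
      show G.r ((l₁ ++ [e]).getLast _) = G.r e
      rw [List.getLast_append_of_ne_nil _ (by simp)]
      rfl
    by_cases h2 : l₂ = []
    · subst h2
      refine ⟨e, PA.basis (Sum.inr ⟨l₁, h1, hc1⟩ : GPath G),
        PA.basis (GPath.ofVertex (G.r e)), hnre, ?_⟩
      rw [hx1, mul_ov PA (G.r e) _ hrng_pe1]
      exact congrArg PA.basis (congrArg Sum.inr (Subtype.ext (by simpa using hsplit)))
    · refine ⟨e, PA.basis (Sum.inr ⟨l₁, h1, hc1⟩ : GPath G),
        PA.basis (Sum.inr ⟨l₂, h2, hc2'⟩ : GPath G), hnre, ?_⟩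
      have hmc2 : GPath.rng (Sum.inr ⟨l₁ ++ [e], by simp, hcomb⟩ : GPath G)
          = GPath.src (Sum.inr ⟨l₂, h2, hc2'⟩ : GPath G) := by
        rw [hrng_pe1]
        exact hheade _ (List.head?_eq_head h2)
      rw [hx1, PA.mul_comp _ _ hmc2]
      refine congrArg PA.basis (congrArg Sum.inr (Subtype.ext ?_))
      show l.1 = (l₁ ++ [e]) ++ l₂
      rw [hsplit, List.append_assoc]
      rfl

lemma nr_basis_smul_mem_ideal {p : GPath G} (hp : G.NoReturnPath p) (k : K) :
    k • PA.basis p ∈ (TwoSidedIdeal.span {x : A | ∃ e : G.Edge, G.NoReturnEdge e ∧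
      x = PA.basis (GPath.ofEdge e)} : TwoSidedIdeal A) := by
  obtain ⟨e, x, y, hnre, heq⟩ := exists_factor PA hp
  rw [heq, ← smul_mul_assoc, ← smul_mul_assoc]
  exact TwoSidedIdeal.mul_mem_right _ _ _
    (TwoSidedIdeal.mul_mem_left _ _ _ (TwoSidedIdeal.subset_span ⟨e, hnre, rfl⟩))

lemma nr_span_subset_ideal :
    (Submodule.span K (PA.basis '' {p : GPath G | G.NoReturnPath p}) : Set A) ⊆
      ((TwoSidedIdeal.span {x : A | ∃ e : G.Edge, G.NoReturnEdge e ∧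
        x = PA.basis (GPath.ofEdge e)} : TwoSidedIdeal A) : Set A) := by
  intro z hz
  rw [SetLike.mem_coe] at hz ⊢
  have main : ∀ k : K, k • z ∈ (TwoSidedIdeal.span {x : A | ∃ e : G.Edge, G.NoReturnEdge e ∧
      x = PA.basis (GPath.ofEdge e)} : TwoSidedIdeal A) := by
    induction hz using Submodule.span_induction with
    | mem x hx =>
      obtain ⟨p, hpm, rfl⟩ := hx
      exact fun k => nr_basis_smul_mem_ideal PA hpm k
    | zero => intro k; rw [smul_zero]; exact zero_mem _
    | add x y _ _ hx hy => intro k; rw [smul_add]; exact add_mem (hx k) (hy k)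
    | smul k' x _ hx => intro k; rw [smul_smul]; exact hx (k * k')
  have h1 := main 1
  rwa [one_smul] at h1

lemma nr_mul_left {x y : A}
    (hy : y ∈ Submodule.span K (PA.basis '' {p : GPath G | G.NoReturnPath p})) :
    x * y ∈ Submodule.span K (PA.basis '' {p : GPath G | G.NoReturnPath p}) := by
  refine mul_mem_span_of_cset_subset PA ?_ (mem_span_univ PA x) hy
  rintro r ⟨p', -, q', hq', hcomp, rfl⟩
  exact NoReturnPath.comp_left hcomp hq'

lemma nr_mul_right {x y : A}
    (hx : x ∈ Submodule.span K (PA.basis '' {p : GPath G | G.NoReturnPath p})) :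
    x * y ∈ Submodule.span K (PA.basis '' {p : GPath G | G.NoReturnPath p}) := by
  refine mul_mem_span_of_cset_subset PA ?_ hx (mem_span_univ PA y)
  rintro r ⟨p', hp', q', -, hcomp, rfl⟩
  exact NoReturnPath.comp_right hcomp hp'

lemma ideal_subset_nr_span :
    ((TwoSidedIdeal.span {x : A | ∃ e : G.Edge, G.NoReturnEdge e ∧
        x = PA.basis (GPath.ofEdge e)} : TwoSidedIdeal A) : Set A) ⊆
      (Submodule.span K (PA.basis '' {p : GPath G | G.NoReturnPath p}) : Set A) := by
  intro z hz
  rw [SetLike.mem_coe] at hz ⊢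
  let J : TwoSidedIdeal A := TwoSidedIdeal.mk'
    ((Submodule.span K (PA.basis '' {p : GPath G | G.NoReturnPath p}) : Submodule K A) : Set A)
    (zero_mem _) (fun hx hy => add_mem hx hy) (fun hx => neg_mem hx)
    (fun hy => nr_mul_left PA hy) (fun hx => nr_mul_right PA hx)
  have hzJ := TwoSidedIdeal.mem_span_iff.mp hz J ?_
  · rwa [TwoSidedIdeal.mem_mk'] at hzJ
  · rintro _ ⟨e, hnre, rfl⟩
    rw [SetLike.mem_coe, TwoSidedIdeal.mem_mk']
    exact Submodule.subset_span ⟨GPath.ofEdge e, ofEdge_noReturnPath hnre, rfl⟩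

end Ideal

/-- the Jacobson radical of `KE` is the span of the paths without
return, which is also the two-sided ideal generated by the edges without return. -/
theorem stmt18 (K : Type) [Field K] (G : DGraph)
    (A : Type) [NonUnitalRing A] [Module K A] [SMulCommClass K A A] [IsScalarTower K A A]
    (PA : PathAlgebraOn K G A) :
    jacRad A =
      ((Submodule.span K (PA.basis '' {p : GPath G | G.NoReturnPath p}) :
        Submodule K A) : Set A) ∧
    jacRad A =
      ((TwoSidedIdeal.span {x : A | ∃ e : G.Edge, G.NoReturnEdge e ∧
        x = PA.basis (GPath.ofEdge e)} : TwoSidedIdeal A) : Set A) := by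
  have hN : jacRad A =
      ((Submodule.span K (PA.basis '' {p : GPath G | G.NoReturnPath p}) :
        Submodule K A) : Set A) :=
    Set.Subset.antisymm (jacRad_subset_nr PA) (nr_subset_jacRad PA)
  refine ⟨hN, ?_⟩
  rw [hN]
  exact Set.Subset.antisymm (nr_span_subset_ideal PA) (ideal_subset_nr_span PA)
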